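/- Let p ≥ (ln n)/n. With probability tending to 1 as n → ∞, G ~ G(n,p) satisfies: for every subset U ⊆ V with 1 ≤ |U| ≤ n/(ln² n) and every ε > 0, all but o(n) vertices v ∈ V∖U have at most ε·np/ln n neighbors in U. -/

import Mathlib

open MeasureTheory Filter

/-- The Erdős–Rényi random graph measure `G(n,p)`: each potential edge (an element of
`Sym2 (Fin n)`) is present independently with probability `p`. -/
noncomputable def gnp (n : ℕ) (p : ENNReal) (hp : p ≤ 1) :
    Measure (Sym2 (Fin n) → Bool) :=
  Measure.pi fun _ => (PMF.ofFintype (fun b => cond b p (1 - p)) (by simpa using add_tsub_cancel_of_le hp)).toMeasure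

/-- The graph determined by an outcome `ω` of the edge indicators. -/
def graphOf {n : ℕ} (ω : Sym2 (Fin n) → Bool) : SimpleGraph (Fin n) :=
  SimpleGraph.fromEdgeSet {e | ω e = true}


/-- The number of neighbors of `v` inside `U` in the graph `G`. -/
noncomputable def degIn {V : Type*} (G : SimpleGraph V) (v : V) (U : Set V) : ℕ :=
  {u ∈ U | G.Adj v u}.ncard

/-! ### auxiliary lemmas -/

instance gnp_prob (n : ℕ) (p : ENNReal) (hp : p ≤ 1) : IsProbabilityMeasure (gnp n p hp) := by
  unfold gnp; infer_instance

lemma measSet {n : ℕ} (s : Set (Sym2 (Fin n) → Bool)) : MeasurableSet s :=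
  .of_discrete

lemma graphOf_adj {n : ℕ} (ω : Sym2 (Fin n) → Bool) (v u : Fin n) :
    (graphOf ω).Adj v u ↔ ω s(v, u) = true ∧ v ≠ u := by
  simp [graphOf, SimpleGraph.fromEdgeSet_adj]

lemma gnp_cyl (n : ℕ) (p : ENNReal) (hp : p ≤ 1) (S : Finset (Sym2 (Fin n))) :
    gnp n p hp {ω | ∀ e ∈ S, ω e = true} = p ^ S.card := by
  classical
  have hset : {ω : Sym2 (Fin n) → Bool | ∀ e ∈ S, ω e = true}
      = Set.pi Set.univ (fun e => if e ∈ S then ({true} : Set Bool) else Set.univ) := by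
    ext ω
    simp only [Set.mem_setOf_eq, Set.mem_pi, Set.mem_univ, forall_true_left]
    constructor
    · intro h e
      by_cases he : e ∈ S <;> simp [he, h]
    · intro h e he
      have := h e
      simpa [he] using this
  rw [gnp, hset, Measure.pi_pi]
  have hfac : ∀ e : Sym2 (Fin n),
      (PMF.ofFintype (fun b => cond b p (1 - p)) (by simpa using add_tsub_cancel_of_le hp)).toMeasure (if e ∈ S then ({true} : Set Bool) else Set.univ)
        = if e ∈ S then p else 1 := by
    intro e
    by_cases he : e ∈ S
    · rw [if_pos he, if_pos he, PMF.toMeasure_apply_singleton _ _ (measurableSet_singleton _)]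
      rfl
    · rw [if_neg he, if_neg he, measure_univ]
  simp only [hfac]
  rw [Finset.prod_ite_mem, Finset.univ_inter, Finset.prod_const]

lemma bad_bound (n : ℕ) (p : ENNReal) (hp : p ≤ 1) (m : ℕ) :
    gnp n p hp {ω | ∃ v : Fin n, m ≤ ({u | (graphOf ω).Adj v u}).ncard}
      ≤ n * (n - 1).choose m * p ^ m := by
  classical
  set Ev : Fin n → Finset (Sym2 (Fin n)) :=
    fun v => (Finset.univ.erase v).image (fun u => s(v, u)) with hEv
  have hEvcard : ∀ v : Fin n, (Ev v).card = n - 1 := by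
    intro v
    rw [hEv]
    rw [Finset.card_image_of_injOn, Finset.card_erase_of_mem (Finset.mem_univ v),
      Finset.card_univ, Fintype.card_fin]
    intro a ha b hb hab
    simp only [Finset.coe_erase, Set.mem_diff, Set.mem_singleton_iff] at ha hb
    rcases Sym2.eq_iff.mp hab with ⟨-, h2⟩ | ⟨h1, h2⟩
    · exact h2
    · exact absurd h2 ha.2
  have hsub : {ω : Sym2 (Fin n) → Bool | ∃ v : Fin n, m ≤ ({u | (graphOf ω).Adj v u}).ncard}
      ⊆ ⋃ v : Fin n, ⋃ S ∈ (Ev v).powersetCard m, {ω | ∀ e ∈ S, ω e = true} := by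
    rintro ω ⟨v, hv⟩
    have hfin : ({u | (graphOf ω).Adj v u}).Finite := Set.toFinite _
    rw [Set.ncard_eq_toFinset_card _ hfin] at hv
    obtain ⟨T, hT, hTcard⟩ := Finset.exists_subset_card_eq hv
    refine Set.mem_iUnion.2 ⟨v, Set.mem_iUnion.2 ⟨T.image (fun u => s(v, u)),
      Set.mem_iUnion.2 ⟨?_, ?_⟩⟩⟩
    · rw [Finset.mem_powersetCard]
      constructor
      · intro e he
        obtain ⟨u, hu, rfl⟩ := Finset.mem_image.mp he
        have hadj : (graphOf ω).Adj v u := by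
          have := hT hu; simpa [Set.Finite.mem_toFinset] using this
        exact Finset.mem_image.mpr
          ⟨u, Finset.mem_erase.mpr ⟨(hadj.ne).symm, Finset.mem_univ u⟩, rfl⟩
      · rw [Finset.card_image_of_injOn, hTcard]
        intro a ha b hb hab
        have hav : (graphOf ω).Adj v a := by
          have := hT ha; simpa [Set.Finite.mem_toFinset] using this
        rcases Sym2.eq_iff.mp hab with ⟨-, h2⟩ | ⟨h1, h2⟩
        · exact h2
        · exact absurd h2 hav.ne'
    · intro e he
      obtain ⟨u, hu, rfl⟩ := Finset.mem_image.mp he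
      have hadj : (graphOf ω).Adj v u := by
        have := hT hu; simpa [Set.Finite.mem_toFinset] using this
      exact ((graphOf_adj ω v u).mp hadj).1
  calc gnp n p hp {ω | ∃ v : Fin n, m ≤ ({u | (graphOf ω).Adj v u}).ncard}
      ≤ gnp n p hp (⋃ v : Fin n, ⋃ S ∈ (Ev v).powersetCard m, {ω | ∀ e ∈ S, ω e = true}) :=
        measure_mono hsub
    _ ≤ ∑ v : Fin n, gnp n p hp (⋃ S ∈ (Ev v).powersetCard m, {ω | ∀ e ∈ S, ω e = true}) :=
        measure_iUnion_fintype_le _ _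
    _ ≤ ∑ v : Fin n, ∑ S ∈ (Ev v).powersetCard m, gnp n p hp {ω | ∀ e ∈ S, ω e = true} := by
        refine Finset.sum_le_sum fun v _ => ?_
        exact measure_biUnion_finset_le _ _
    _ ≤ n * (n - 1).choose m * p ^ m := by
        have : ∀ v : Fin n, ∑ S ∈ (Ev v).powersetCard m, gnp n p hp {ω | ∀ e ∈ S, ω e = true}
            = (n - 1).choose m * p ^ m := by
          intro v
          rw [Finset.sum_congr rfl (fun S hS => ?_), Finset.sum_const, Finset.card_powersetCard,
            hEvcard, nsmul_eq_mul]
          rw [gnp_cyl, (Finset.mem_powersetCard.mp hS).2]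
        rw [Finset.sum_congr rfl (fun v _ => this v), Finset.sum_const, Finset.card_univ,
          Fintype.card_fin, nsmul_eq_mul, ← mul_assoc]

lemma succ_pow_le (m : ℕ) : ((m : ℝ) + 1) ^ m ≤ Real.exp 1 * (m : ℝ) ^ m := by
  rcases Nat.eq_zero_or_pos m with rfl | hm
  · simpa using Real.one_le_exp zero_le_one
  · have hm' : (0 : ℝ) < m := by exact_mod_cast hm
    have h1 : (m : ℝ) + 1 ≤ m * Real.exp (1 / m) := by
      have := Real.add_one_le_exp (1 / (m : ℝ))
      calc (m : ℝ) + 1 = m * (1 / m + 1) := by field_simp; ring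
        _ ≤ m * Real.exp (1 / m) := by nlinarith [Real.add_one_le_exp (1 / (m:ℝ))]
    calc ((m : ℝ) + 1) ^ m ≤ (m * Real.exp (1 / m)) ^ m := by
          refine pow_le_pow_left₀ (by positivity) h1 m
      _ = (m : ℝ) ^ m * Real.exp (1 / m) ^ m := mul_pow _ _ _
      _ = (m : ℝ) ^ m * Real.exp 1 := by
          rw [← Real.exp_nat_mul]
          congr 1
          field_simp
      _ = Real.exp 1 * (m : ℝ) ^ m := mul_comm _ _

lemma pow_le_exp_mul_factorial (m : ℕ) : (m : ℝ) ^ m ≤ Real.exp 1 ^ m * m.factorial := by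
  induction m with
  | zero => simp
  | succ k ih =>
      have h2 : ((k : ℝ) + 1) ^ k ≤ Real.exp 1 * (k : ℝ) ^ k := succ_pow_le k
      have hk : (0 : ℝ) ≤ (k : ℝ) + 1 := by positivity
      calc ((k + 1 : ℕ) : ℝ) ^ (k + 1) = ((k : ℝ) + 1) * ((k : ℝ) + 1) ^ k := by
            push_cast; ring
        _ ≤ ((k : ℝ) + 1) * (Real.exp 1 * (k : ℝ) ^ k) := by
            exact mul_le_mul_of_nonneg_left h2 hk
        _ ≤ ((k : ℝ) + 1) * (Real.exp 1 * (Real.exp 1 ^ k * k.factorial)) := by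
            refine mul_le_mul_of_nonneg_left ?_ hk
            exact mul_le_mul_of_nonneg_left ih (Real.exp_pos 1).le
        _ = Real.exp 1 ^ (k + 1) * ((k + 1 : ℕ) * k.factorial) := by push_cast; ring
        _ = Real.exp 1 ^ (k + 1) * ((k + 1).factorial) := by
            rw [Nat.factorial_succ]; push_cast; ring

lemma exp_one_lt_3 : Real.exp 1 < 3 := by
  have := Real.exp_one_lt_d9
  linarith

lemma tail_bound (n : ℕ) (hn : 3 ≤ n) (r : ℝ) (hr1 : Real.log n / n ≤ r) :
    (n : ℝ) * ((n - 1).choose ⌈8 * (n : ℝ) * r⌉₊) * r ^ (⌈8 * (n : ℝ) * r⌉₊) ≤ 1 / n := by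
  have hn0 : (0 : ℝ) < n := by exact_mod_cast Nat.lt_of_lt_of_le (by norm_num) hn
  have hln1 : 1 ≤ Real.log n := by
    rw [Real.le_log_iff_exp_le hn0]
    exact le_of_lt (lt_of_lt_of_le exp_one_lt_3 (by exact_mod_cast hn))
  have hr0 : 0 < r := lt_of_lt_of_le (by positivity) hr1
  have hR : Real.log n ≤ n * r := by
    rw [div_le_iff₀ hn0] at hr1; linarith [hr1]
  have hnr1 : (1 : ℝ) ≤ n * r := le_trans hln1 hR
  set m := ⌈8 * (n : ℝ) * r⌉₊ with hmdef
  have hm8 : 8 * ((n : ℝ) * r) ≤ m := by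
    have := Nat.le_ceil (8 * (n : ℝ) * r); rw [← hmdef] at this; linarith
  have hmpos : (0 : ℝ) < m := by linarith
  have hfac : (0 : ℝ) < m.factorial := by exact_mod_cast m.factorial_pos
  have he : (0 : ℝ) < Real.exp 1 := Real.exp_pos 1
  have hchoose : (((n - 1).choose m : ℕ) : ℝ) ≤ (n : ℝ) ^ m / m.factorial := by
    calc (((n - 1).choose m : ℕ) : ℝ) ≤ ((n - 1 : ℕ) : ℝ) ^ m / m.factorial :=
        Nat.choose_le_pow_div m (n - 1)
      _ ≤ (n : ℝ) ^ m / m.factorial := by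
        gcongr
        exact_mod_cast Nat.sub_le n 1
  have hfacbound : ((n : ℝ) * r) ^ m / m.factorial ≤ (Real.exp 1 * ((n : ℝ) * r) / m) ^ m := by
    have h1 : (m : ℝ) ^ m ≤ Real.exp 1 ^ m * m.factorial := pow_le_exp_mul_factorial m
    rw [div_le_iff₀ hfac, div_pow]
    rw [div_mul_eq_mul_div, le_div_iff₀ (by positivity)]
    calc ((n : ℝ) * r) ^ m * (m : ℝ) ^ m
        ≤ ((n : ℝ) * r) ^ m * (Real.exp 1 ^ m * m.factorial) := by
          gcongr
      _ = (Real.exp 1 * ((n : ℝ) * r)) ^ m * m.factorial := by rw [mul_pow]; ring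
  have hstep4 : (Real.exp 1 * ((n : ℝ) * r) / m) ^ m ≤ (Real.exp 1 / 8) ^ m := by
    apply pow_le_pow_left₀ (by positivity)
    rw [div_le_div_iff₀ hmpos (by norm_num)]
    calc Real.exp 1 * ((n : ℝ) * r) * 8 = Real.exp 1 * (8 * ((n : ℝ) * r)) := by ring
      _ ≤ Real.exp 1 * m := by gcongr
      _ = Real.exp 1 * m := rfl
  have hlog8 : (2 : ℝ) ≤ Real.log 8 := by
    rw [Real.le_log_iff_exp_le (by norm_num)]
    have h9 := Real.exp_one_lt_d9
    calc Real.exp 2 = Real.exp 1 * Real.exp 1 := by rw [← Real.exp_add]; norm_num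
      _ ≤ 2.7182818286 * 2.7182818286 := by nlinarith [Real.exp_pos 1]
      _ ≤ 8 := by norm_num
  have hm8ln : 8 * Real.log n ≤ m := by nlinarith
  have hstep5 : (Real.exp 1 / 8) ^ m ≤ Real.exp (-(8 * Real.log n)) := by
    have hpos : (0 : ℝ) < Real.exp 1 / 8 := by positivity
    have hlogval : Real.log (Real.exp 1 / 8) = 1 - Real.log 8 := by
      rw [Real.log_div (by positivity) (by norm_num), Real.log_exp]
    have : (Real.exp 1 / 8) ^ m = Real.exp ((m : ℝ) * (1 - Real.log 8)) := by
      rw [← hlogval, ← Real.log_pow, Real.exp_log (by positivity)]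
    rw [this, Real.exp_le_exp]
    nlinarith
  have hfinal : (n : ℝ) * Real.exp (-(8 * Real.log n)) ≤ 1 / n := by
    have h1 : (n : ℝ) = Real.exp (Real.log n) := (Real.exp_log hn0).symm
    have h2 : (1 : ℝ) / n = Real.exp (-Real.log n) := by
      rw [Real.exp_neg, Real.exp_log hn0, one_div]
    rw [h2]
    calc (n : ℝ) * Real.exp (-(8 * Real.log n))
        = Real.exp (Real.log n) * Real.exp (-(8 * Real.log n)) := by rw [← h1]
      _ = Real.exp (Real.log n + -(8 * Real.log n)) := by rw [Real.exp_add]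
      _ ≤ Real.exp (-Real.log n) := by rw [Real.exp_le_exp]; nlinarith
  calc (n : ℝ) * ((n - 1).choose m) * r ^ m
      = (n : ℝ) * (((n - 1).choose m) * r ^ m) := by ring
    _ ≤ (n : ℝ) * ((n : ℝ) ^ m / m.factorial * r ^ m) := by
        gcongr
    _ = (n : ℝ) * (((n : ℝ) * r) ^ m / m.factorial) := by rw [mul_pow]; ring
    _ ≤ (n : ℝ) * ((Real.exp 1 * ((n : ℝ) * r) / m) ^ m) := by gcongr
    _ ≤ (n : ℝ) * ((Real.exp 1 / 8) ^ m) := by gcongr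
    _ ≤ (n : ℝ) * Real.exp (-(8 * Real.log n)) := by gcongr
    _ ≤ 1 / n := hfinal

lemma det_bound {n : ℕ} (G : SimpleGraph (Fin n)) (U : Set (Fin n)) (D : ℕ)
    (hD : ∀ v : Fin n, ({u | G.Adj v u}).ncard ≤ D) (T : ℝ) (hT : 0 < T) :
    ({v | v ∉ U ∧ T < (degIn G v U : ℝ)}.ncard : ℝ) ≤ U.ncard * D / T := by
  classical
  set B : Finset (Fin n) := (Set.toFinite {v | v ∉ U ∧ T < (degIn G v U : ℝ)}).toFinset with hB
  set UF : Finset (Fin n) := (Set.toFinite U).toFinset with hUF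
  have hBcard : {v | v ∉ U ∧ T < (degIn G v U : ℝ)}.ncard = B.card :=
    Set.ncard_eq_toFinset_card _ _
  have hUcard : U.ncard = UF.card := Set.ncard_eq_toFinset_card _ _
  have hdegIn : ∀ v : Fin n, degIn G v U = (UF.filter (fun u => G.Adj v u)).card := by
    intro v
    rw [degIn, Set.ncard_eq_toFinset_card _ (Set.toFinite _)]
    congr 1
    ext u
    simp [hUF, Set.Finite.mem_toFinset]
  have hsum : ∑ v ∈ B, degIn G v U ≤ UF.card * D := by
    have hswap : ∑ v ∈ B, degIn G v U = ∑ u ∈ UF, (B.filter (fun v => G.Adj u v)).card := by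
      calc ∑ v ∈ B, degIn G v U
          = ∑ v ∈ B, ∑ u ∈ UF, (if G.Adj v u then 1 else 0) := by
            refine Finset.sum_congr rfl fun v _ => ?_
            rw [hdegIn v, Finset.card_filter]
        _ = ∑ u ∈ UF, ∑ v ∈ B, (if G.Adj v u then 1 else 0) := Finset.sum_comm
        _ = ∑ u ∈ UF, (B.filter (fun v => G.Adj u v)).card := by
            refine Finset.sum_congr rfl fun u _ => ?_
            rw [Finset.card_filter]
            refine Finset.sum_congr rfl fun v _ => ?_
            simp [SimpleGraph.adj_comm]
    rw [hswap]
    calc ∑ u ∈ UF, (B.filter (fun v => G.Adj u v)).card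
        ≤ ∑ u ∈ UF, D := by
          refine Finset.sum_le_sum fun u _ => ?_
          refine le_trans ?_ (hD u)
          rw [Set.ncard_eq_toFinset_card _ (Set.toFinite _)]
          apply Finset.card_le_card
          intro v hv
          simp only [Finset.mem_filter] at hv
          simp [Set.Finite.mem_toFinset, hv.2]
      _ = UF.card * D := by rw [Finset.sum_const, smul_eq_mul]
  have hlow : (B.card : ℝ) * T ≤ ∑ v ∈ B, (degIn G v U : ℝ) := by
    have : ∀ v ∈ B, T ≤ (degIn G v U : ℝ) := by
      intro v hv
      rw [hB, Set.Finite.mem_toFinset] at hv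
      exact hv.2.le
    calc (B.card : ℝ) * T = ∑ _v ∈ B, T := by rw [Finset.sum_const, nsmul_eq_mul]
      _ ≤ ∑ v ∈ B, (degIn G v U : ℝ) := Finset.sum_le_sum this
  have hsumR : ∑ v ∈ B, (degIn G v U : ℝ) ≤ (UF.card : ℝ) * D := by
    calc ∑ v ∈ B, (degIn G v U : ℝ) = ((∑ v ∈ B, degIn G v U : ℕ) : ℝ) := by push_cast; ring
      _ ≤ ((UF.card * D : ℕ) : ℝ) := by exact_mod_cast hsum
      _ = (UF.card : ℝ) * D := by push_cast; ring
  rw [hBcard, hUcard]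
  rw [le_div_iff₀ hT]
  exact le_trans hlow hsumR

/-- P9. -/
theorem gnp_few_high_attachment (p : ℕ → ENNReal) (hp : ∀ n, p n ≤ 1)
    (hlb : ∀ n : ℕ, ENNReal.ofReal (Real.log n / n) ≤ p n)
    (ε δ : ℝ) (hε : 0 < ε) (hδ : 0 < δ) :
    Tendsto
      (fun n => gnp n (p n) (hp n)
        {ω | ∀ U : Set (Fin n),
          1 ≤ U.ncard → (U.ncard : ℝ) ≤ n / (Real.log n) ^ 2 →
          (({v | v ∉ U ∧
              ε * n * (p n).toReal / Real.log n < (degIn (graphOf ω) v U : ℝ)}.ncard : ℝ))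
            ≤ δ * n})
      atTop (nhds 1) := by
  classical
  have hpne : ∀ n, p n ≠ ⊤ := fun n => ne_top_of_le_ne_top ENNReal.one_ne_top (hp n)
  set r : ℕ → ℝ := fun n => (p n).toReal with hrdef
  have hrle : ∀ n : ℕ, Real.log n / n ≤ r n := by
    intro n
    have h := ENNReal.toReal_mono (hpne n) (hlb n)
    rwa [ENNReal.toReal_ofReal (div_nonneg (Real.log_natCast_nonneg n) (Nat.cast_nonneg n))] at h
  set m : ℕ → ℕ := fun n => ⌈8 * (n : ℝ) * r n⌉₊ with hmdef
  set Bad : (n : ℕ) → Set (Sym2 (Fin n) → Bool) :=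
    fun n => {ω | ∃ v : Fin n, m n ≤ ({u | (graphOf ω).Adj v u}).ncard} with hBaddef
  have hN : ∀ᶠ n : ℕ in atTop, 8 / (ε * δ) ≤ Real.log n ∧ 3 ≤ n := by
    have h1 : Tendsto (fun n : ℕ => Real.log n) atTop atTop :=
      Real.tendsto_log_atTop.comp tendsto_natCast_atTop_atTop
    filter_upwards [h1.eventually_ge_atTop (8 / (ε * δ)), eventually_ge_atTop 3] with n h2 h3
    exact ⟨h2, h3⟩
  have key : ∀ᶠ n : ℕ in atTop, 1 - ENNReal.ofReal (1 / n) ≤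
      gnp n (p n) (hp n)
        {ω | ∀ U : Set (Fin n),
          1 ≤ U.ncard → (U.ncard : ℝ) ≤ n / (Real.log n) ^ 2 →
          (({v | v ∉ U ∧
              ε * n * (p n).toReal / Real.log n < (degIn (graphOf ω) v U : ℝ)}.ncard : ℝ))
            ≤ δ * n} := by
    filter_upwards [hN] with n hn
    obtain ⟨hlog, hn3⟩ := hn
    have hn0 : (0 : ℝ) < n := by
      exact_mod_cast Nat.lt_of_lt_of_le (by norm_num) hn3
    have hln1 : (1 : ℝ) ≤ Real.log n := by
      rw [Real.le_log_iff_exp_le hn0]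
      exact le_of_lt (lt_of_lt_of_le exp_one_lt_3 (by exact_mod_cast hn3))
    have hln0 : (0 : ℝ) < Real.log n := lt_of_lt_of_le one_pos hln1
    have hr0 : 0 < r n := lt_of_lt_of_le (by positivity) (hrle n)
    have hincl : (Bad n)ᶜ ⊆
        {ω : Sym2 (Fin n) → Bool | ∀ U : Set (Fin n),
          1 ≤ U.ncard → (U.ncard : ℝ) ≤ n / (Real.log n) ^ 2 →
          (({v | v ∉ U ∧
              ε * n * (p n).toReal / Real.log n < (degIn (graphOf ω) v U : ℝ)}.ncard : ℝ))
            ≤ δ * n} := by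
      intro ω hω
      simp only [hBaddef, Set.mem_compl_iff, Set.mem_setOf_eq, not_exists, not_le] at hω
      intro U hU1 hU2
      have hD : ∀ v : Fin n, ({u | (graphOf ω).Adj v u}).ncard ≤ m n - 1 := fun v =>
        Nat.le_sub_one_of_lt (hω v)
      have hT : 0 < ε * n * r n / Real.log n := by positivity
      have hdet := det_bound (graphOf ω) U (m n - 1) hD _ hT
      refine le_trans hdet ?_
      have hm1 : 1 ≤ m n := by
        rw [hmdef]
        exact Nat.one_le_ceil_iff.mpr (by positivity)
      have hDr : ((m n - 1 : ℕ) : ℝ) ≤ 8 * n * r n := by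
        have hceil : ((m n : ℕ) : ℝ) < 8 * (n : ℝ) * r n + 1 := by
          rw [hmdef]
          exact Nat.ceil_lt_add_one (by positivity)
        rw [Nat.cast_sub hm1]
        push_cast
        linarith
      have hDnn : (0 : ℝ) ≤ ((m n - 1 : ℕ) : ℝ) := Nat.cast_nonneg _
      calc (U.ncard : ℝ) * ((m n - 1 : ℕ) : ℝ) / (ε * n * r n / Real.log n)
          ≤ ((n : ℝ) / (Real.log n) ^ 2) * (8 * n * r n) / (ε * n * r n / Real.log n) := by
            gcongr
        _ = 8 * n / (ε * Real.log n) := by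
            field_simp
        _ ≤ δ * n := by
            rw [div_le_iff₀ (by positivity)]
            have h8 : (8 : ℝ) ≤ Real.log n * (ε * δ) := (div_le_iff₀ (mul_pos hε hδ)).mp hlog
            nlinarith [mul_le_mul_of_nonneg_right h8 hn0.le]
    have hBadM : gnp n (p n) (hp n) (Bad n) ≤ ENNReal.ofReal (1 / n) := by
      calc gnp n (p n) (hp n) (Bad n)
          ≤ n * (n - 1).choose (m n) * (p n) ^ (m n) := bad_bound n (p n) (hp n) (m n)
        _ = ENNReal.ofReal ((n : ℝ) * ((n - 1).choose (m n)) * (r n) ^ (m n)) := by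
            rw [ENNReal.ofReal_mul (by positivity), ENNReal.ofReal_mul (by positivity),
              ENNReal.ofReal_pow ENNReal.toReal_nonneg, ENNReal.ofReal_natCast,
              ENNReal.ofReal_natCast, ENNReal.ofReal_toReal (hpne n)]
        _ ≤ ENNReal.ofReal (1 / n) :=
            ENNReal.ofReal_le_ofReal (tail_bound n hn3 (r n) (hrle n))
    calc (1 : ENNReal) - ENNReal.ofReal (1 / n)
        ≤ 1 - gnp n (p n) (hp n) (Bad n) := tsub_le_tsub_left hBadM 1
      _ = gnp n (p n) (hp n) ((Bad n)ᶜ) := (prob_compl_eq_one_sub (measSet _)).symm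
      _ ≤ _ := measure_mono hincl
  have hlow : Tendsto (fun n : ℕ => 1 - ENNReal.ofReal (1 / n)) atTop (nhds 1) := by
    have h0 : Tendsto (fun n : ℕ => ENNReal.ofReal (1 / n)) atTop (nhds 0) := by
      rw [← ENNReal.ofReal_zero]
      exact (ENNReal.continuous_ofReal.tendsto 0).comp tendsto_one_div_atTop_nhds_zero_nat
    simpa using ENNReal.Tendsto.sub tendsto_const_nhds h0 (Or.inl ENNReal.one_ne_top)
  exact tendsto_of_tendsto_of_tendsto_of_le_of_le' hlow tendsto_const_nhds key
    (Eventually.of_forall fun n => prob_le_one)
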